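/- arXiv:1401.6748 — 2 statements merged into one kernel-verified Lean document; each statement's English description precedes it below -/
import Mathlib

section
/- Let H be a complex Hilbert space, let u be a unitary bounded linear operator on H, and let n ≥ 1 be a natural number. Then there exists a unitary bounded linear operator v on H such that vⁿ = u. -/
namespace Stmt7Root
open Complex Filter Topology Set
open scoped InnerProductSpace

/-! ### Scalar part: continuous approximations to the branch-cut n-th root on the circle -/

noncomputable def eps (k : ℕ) : ℝ := (2:ℝ)⁻¹ ^ (k+1)
noncomputable def cf (k : ℕ) (y : ℝ) : ℝ := max 0 (min 1 (-y / eps k))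
noncomputable def tf (k : ℕ) (z : ℂ) : ℝ :=
  if z.re < -(1/2) then (if z.im < 0 then 1 else 0) - cf k z.im else 0
noncomputable def th (n k : ℕ) (z : ℂ) : ℝ := (Complex.arg z + 2*Real.pi * tf k z) / n
noncomputable def ff (n k : ℕ) (z : ℂ) : ℂ := Complex.exp ((th n k z : ℂ) * I)
noncomputable def g0 (n : ℕ) (z : ℂ) : ℂ := Complex.exp (((Complex.arg z / n : ℝ) : ℂ) * I)

lemma eps_pos (k : ℕ) : 0 < eps k := by rw [eps]; positivity
lemma eps_le_half (k : ℕ) : eps k ≤ 1/2 := by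
  have : (2:ℝ)⁻¹ ^ (k+1) ≤ (2:ℝ)⁻¹ ^ 1 :=
    pow_le_pow_of_le_one (by norm_num) (by norm_num) (by omega)
  simpa [eps] using this
lemma eps_antitone {k j : ℕ} (h : k ≤ j) : eps j ≤ eps k :=
  pow_le_pow_of_le_one (by norm_num) (by norm_num) (by omega)
lemma eps_half {k j : ℕ} (h : k < j) : 2 * eps j ≤ eps k := by
  have : (2:ℝ)⁻¹ ^ (j+1) ≤ (2:ℝ)⁻¹ ^ (k+2) :=
    pow_le_pow_of_le_one (by norm_num) (by norm_num) (by omega)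
  have h2 : (2:ℝ)⁻¹ ^ (k+2) = (1/2) * (2:ℝ)⁻¹ ^ (k+1) := by ring
  rw [eps, eps]; nlinarith [this]
lemma cf_nonneg (k : ℕ) (y : ℝ) : 0 ≤ cf k y := le_max_left _ _
lemma cf_le_one (k : ℕ) (y : ℝ) : cf k y ≤ 1 :=
  max_le (by norm_num) (min_le_left _ _)
lemma cf_of_nonneg (k : ℕ) {y : ℝ} (hy : 0 ≤ y) : cf k y = 0 := by
  have : -y / eps k ≤ 0 := div_nonpos_of_nonpos_of_nonneg (by linarith) (eps_pos k).le
  simp only [cf, max_eq_left_iff]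
  exact le_trans (min_le_right _ _) this
lemma cf_of_le (k : ℕ) {y : ℝ} (hy : y ≤ -eps k) : cf k y = 1 := by
  have h1 : (1:ℝ) ≤ -y / eps k := (le_div_iff₀ (eps_pos k)).2 (by linarith)
  simp [cf, min_eq_left h1]
lemma cf_mono {k j : ℕ} (h : k ≤ j) (y : ℝ) : cf k y ≤ cf j y := by
  rcases le_or_gt 0 y with hy | hy
  · rw [cf_of_nonneg k hy, cf_of_nonneg j hy]
  · have : -y / eps k ≤ -y / eps j :=
      div_le_div_of_nonneg_left (by linarith) (eps_pos j) (eps_antitone h)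
    exact max_le_max le_rfl (min_le_min le_rfl this)
lemma cf_continuous (k : ℕ) : Continuous (cf k) := by
  apply Continuous.max continuous_const
  exact Continuous.min continuous_const ((continuous_neg).div_const _)
lemma min_cf_le {k j : ℕ} (h : k < j) (y : ℝ) :
    min (cf k y) (1 - cf k y) ≤ cf j y - cf k y := by
  rcases le_or_gt 0 y with hy | hy
  · rw [cf_of_nonneg k hy, cf_of_nonneg j hy]; simp
  · rcases le_or_gt y (-eps j) with hy2 | hy2
    · rw [cf_of_le j hy2]
      exact le_trans (min_le_right _ _) (by linarith)
    · have hej := eps_pos j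
      have hek := eps_pos k
      have h2 : -y < eps j := by linarith
      have hkj : 2 * eps j ≤ eps k := eps_half h
      have hyk : -y / eps k ≤ 1 := by
        rw [div_le_one hek]; linarith
      have hyj : -y / eps j ≤ 1 := by
        rw [div_le_one hej]; linarith
      have hyk0 : 0 ≤ -y / eps k := by
        apply div_nonneg (by linarith) hek.le
      have hyj0 : 0 ≤ -y / eps j := by
        apply div_nonneg (by linarith) hej.le
      have hck : cf k y = -y / eps k := by
        rw [cf, min_eq_right hyk, max_eq_right hyk0]
      have hcj : cf j y = -y / eps j := by
        rw [cf, min_eq_right hyj, max_eq_right hyj0]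
      have key : 2 * (-y / eps k) ≤ -y / eps j := by
        rw [← mul_div_assoc, div_le_div_iff₀ hek hej]
        nlinarith
      refine le_trans (min_le_left _ _) ?_
      rw [hck, hcj]; linarith

lemma chord (a b : ℝ) : ‖(Complex.exp (a*I) - Complex.exp (b*I))‖ ≤ 2 * |a - b| := by
  have h1 : Complex.exp (a*I) - Complex.exp (b*I)
      = Complex.exp (b*I) * (Complex.exp (((a-b:ℝ):ℂ)*I) - 1) := by
    rw [mul_sub, mul_one, ← Complex.exp_add]
    push_cast; ring_nf
  rw [h1, norm_mul, Complex.norm_exp_ofReal_mul_I, one_mul]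
  rcases le_or_gt (|a - b|) 1 with h | h
  · have := Complex.norm_exp_sub_one_le (x := ((a-b:ℝ):ℂ)*I) (by
      rw [norm_mul, Complex.norm_I, mul_one, Complex.norm_real, Real.norm_eq_abs]; exact h)
    calc ‖(Complex.exp (((a-b:ℝ):ℂ)*I) - 1)‖ ≤ 2 * ‖((a-b:ℝ):ℂ)‖ := by
          simpa using this
      _ = 2 * |a - b| := by rw [Complex.norm_real, Real.norm_eq_abs]
  · have h2 : ‖(Complex.exp (((a-b:ℝ):ℂ)*I) - 1)‖ ≤ 2 := by
      refine le_trans (norm_sub_le _ _) ?_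
      rw [Complex.norm_exp_ofReal_mul_I, norm_one]; norm_num
    linarith

lemma tf_eq_zero {k : ℕ} {z : ℂ} (h : ¬ (z.re < -(1/2) ∧ z.im < 0 ∧ -eps k < z.im)) :
    tf k z = 0 := by
  rw [tf]
  split_ifs with h1 h2
  · have h3 : z.im ≤ -eps k := by
      by_contra hc; push_neg at hc; exact h ⟨h1, h2, by linarith⟩
    rw [cf_of_le k h3]; ring
  · rw [cf_of_nonneg k (not_lt.1 h2)]; ring
  · rfl

lemma abs_ff (n k : ℕ) (z : ℂ) : ‖(ff n k z)‖ = 1 :=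
  Complex.norm_exp_ofReal_mul_I _

lemma ff_pow {n : ℕ} (hn : 1 ≤ n) (k : ℕ) (z : ℂ) :
    ff n k z ^ n = Complex.exp (((Complex.arg z + 2*Real.pi * tf k z : ℝ) : ℂ) * I) := by
  rw [ff, ← Complex.exp_nat_mul]
  congr 1
  have hn' : (n:ℂ) ≠ 0 := Nat.cast_ne_zero.2 (by omega)
  rw [th]
  push_cast
  field_simp

lemma exp_arg_eq {z : ℂ} (hz : ‖z‖ = 1) :
    Complex.exp ((Complex.arg z : ℂ) * I) = z := by
  have := Complex.norm_mul_exp_arg_mul_I z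
  rwa [hz, Complex.ofReal_one, one_mul] at this

lemma ff_pow_eq {n : ℕ} (hn : 1 ≤ n) {k : ℕ} {z : ℂ} (hz : ‖z‖ = 1)
    (h : tf k z = 0) : ff n k z ^ n = z := by
  rw [ff_pow hn, h]
  simpa using exp_arg_eq hz

lemma abs_tf_diff {k j : ℕ} (h : k ≤ j) (z : ℂ) :
    |tf k z - tf j z| ≤ cf j z.im - cf k z.im := by
  have hm := cf_mono h z.im
  rw [tf, tf]
  split_ifs with h1 h2
  · rw [show (1 - cf k z.im - (1 - cf j z.im)) = cf j z.im - cf k z.im by ring,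
      _root_.abs_of_nonneg (by linarith)]
  · rw [show (0 - cf k z.im - (0 - cf j z.im)) = cf j z.im - cf k z.im by ring,
      _root_.abs_of_nonneg (by linarith)]
  · simp only [sub_zero, sub_self, abs_zero]; linarith

lemma ff_diff_bound {n k j : ℕ} (hn : 1 ≤ n) (h : k ≤ j) (z : ℂ) :
    ‖(ff n k z - ff n j z)‖ ≤ 4*Real.pi * (cf j z.im - cf k z.im) := by
  refine le_trans (chord _ _) ?_
  have h1 : th n k z - th n j z = 2*Real.pi * (tf k z - tf j z) / n := by
    rw [th, th]; ring
  rw [h1, abs_div, abs_mul]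
  have hπ : |2*Real.pi| = 2*Real.pi := abs_of_pos (by positivity)
  have hn0 : (0:ℝ) < n := by exact_mod_cast Nat.pos_of_ne_zero (by omega)
  have hnn : |(n:ℝ)| = n := abs_of_pos hn0
  rw [hπ, hnn]
  have h2 : |tf k z - tf j z| ≤ cf j z.im - cf k z.im := abs_tf_diff h z
  have hn1 : (1:ℝ) ≤ (n:ℝ) := by exact_mod_cast hn
  have h3 : 2*Real.pi * |tf k z - tf j z| / n ≤ 2*Real.pi * |tf k z - tf j z| :=
    div_le_self (by positivity) hn1
  nlinarith [Real.pi_pos, abs_nonneg (tf k z - tf j z)]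

lemma ff_pow_diff_bound {n k j : ℕ} (hn : 1 ≤ n) (h : k < j) {z : ℂ}
    (hz : ‖z‖ = 1) :
    ‖(ff n k z ^ n - z)‖ ≤ 4*Real.pi * (cf j z.im - cf k z.im) := by
  have hπ := Real.pi_pos
  have hc0 := cf_nonneg k z.im
  have hc1 := cf_le_one k z.im
  have e0 : ff n k z ^ n = Complex.exp (((Complex.arg z + 2*Real.pi * tf k z : ℝ) : ℂ) * I) :=
    ff_pow hn k z
  have b1 : ‖(ff n k z ^ n - z)‖ ≤ 2 * |2*Real.pi * tf k z| := by
    rw [e0]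
    calc ‖(Complex.exp (((Complex.arg z + 2*Real.pi * tf k z : ℝ):ℂ) * I) - z)‖
        = ‖(Complex.exp (((Complex.arg z + 2*Real.pi * tf k z : ℝ):ℂ) * I)
          - Complex.exp ((Complex.arg z : ℂ) * I))‖ := by rw [exp_arg_eq hz]
      _ ≤ 2 * |(Complex.arg z + 2*Real.pi * tf k z) - Complex.arg z| := chord _ _
      _ = 2 * |2*Real.pi * tf k z| := by rw [add_sub_cancel_left]
  have b2 : ‖(ff n k z ^ n - z)‖ ≤ 2 * |2*Real.pi * (tf k z - 1)| := by
    have hz2 : Complex.exp (((Complex.arg z + 2*Real.pi : ℝ):ℂ) * I) = z := by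
      push_cast
      rw [add_mul, Complex.exp_add, exp_arg_eq hz, Complex.exp_two_pi_mul_I, mul_one]
    rw [e0]
    calc ‖(Complex.exp (((Complex.arg z + 2*Real.pi * tf k z : ℝ):ℂ) * I) - z)‖
        = ‖(Complex.exp (((Complex.arg z + 2*Real.pi * tf k z : ℝ):ℂ) * I)
          - Complex.exp (((Complex.arg z + 2*Real.pi : ℝ):ℂ) * I))‖ := by rw [hz2]
      _ ≤ 2 * |(Complex.arg z + 2*Real.pi * tf k z) - (Complex.arg z + 2*Real.pi)| := chord _ _
      _ = 2 * |2*Real.pi * (tf k z - 1)| := by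
          rw [show (Complex.arg z + 2*Real.pi * tf k z) - (Complex.arg z + 2*Real.pi)
            = 2*Real.pi * (tf k z - 1) by ring]
  have key : ‖(ff n k z ^ n - z)‖ ≤
      4*Real.pi * min (cf k z.im) (1 - cf k z.im) := by
    by_cases h1 : z.re < -(1/2)
    · by_cases h2 : z.im < 0
      · have ht : tf k z = 1 - cf k z.im := by rw [tf, if_pos h1, if_pos h2]
        rcases le_total (cf k z.im) (1 - cf k z.im) with hmin | hmin
        · rw [min_eq_left hmin]
          refine le_trans b2 ?_
          rw [ht, show 2*Real.pi * ((1 - cf k z.im) - 1) = -(2*Real.pi * cf k z.im) by ring,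
            abs_neg, _root_.abs_of_nonneg (by positivity)]
          nlinarith
        · rw [min_eq_right hmin]
          refine le_trans b1 ?_
          rw [ht, _root_.abs_of_nonneg (by nlinarith)]
          nlinarith
      · have ht : tf k z = 0 := tf_eq_zero (by tauto)
        refine le_trans b1 ?_
        rw [ht, mul_zero, abs_zero, mul_zero]
        have : (0:ℝ) ≤ min (cf k z.im) (1 - cf k z.im) :=
          le_min hc0 (by linarith)
        nlinarith
    · have ht : tf k z = 0 := tf_eq_zero (by tauto)
      refine le_trans b1 ?_
      rw [ht, mul_zero, abs_zero, mul_zero]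
      have : (0:ℝ) ≤ min (cf k z.im) (1 - cf k z.im) :=
        le_min hc0 (by linarith)
      nlinarith
  refine le_trans key ?_
  have := min_cf_le h z.im
  nlinarith

lemma tf_zero_of_ge {k : ℕ} {z : ℂ} (h : ¬ z.re < -(1/2)) : tf k z = 0 := if_neg h
lemma tf_zero_of_im_nonneg {k : ℕ} {z : ℂ} (h : 0 ≤ z.im) : tf k z = 0 := by
  rw [tf]; split_ifs with h1 h2
  · exact absurd h2 (not_lt.2 h)
  · rw [cf_of_nonneg k h]; ring
  · rfl
lemma tf_zero_of_im_le {k : ℕ} {z : ℂ} (h : z.im ≤ -(1/2)) : tf k z = 0 := by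
  rw [tf]; split_ifs with h1 h2
  · rw [cf_of_le k (le_trans h (by linarith [eps_le_half k]))]; ring
  · linarith
  · rfl

lemma ff_eq_g0 {n k : ℕ} {z : ℂ} (h : tf k z = 0) : ff n k z = g0 n z := by
  rw [ff, g0, th, h]; norm_num

lemma continuousAt_g0 {n : ℕ} {z : ℂ} (hz : z ∈ Complex.slitPlane) :
    ContinuousAt (g0 n) z := by
  have h1 : ContinuousAt Complex.arg z := Complex.continuousAt_arg hz
  exact (Complex.continuous_exp.continuousAt).comp
    (((Complex.continuous_ofReal.continuousAt.comp (h1.div_const _)).mul continuousAt_const))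

lemma mem_slit_of_sphere {z : ℂ} (hz : ‖z‖ = 1) (h : -(1/2) ≤ z.re) :
    z ∈ Complex.slitPlane := by
  rw [Complex.mem_slitPlane_iff]
  by_cases him : z.im = 0
  · left
    have : z = (z.re : ℂ) := Complex.ext rfl (by simp [him])
    rw [this, Complex.norm_real, Real.norm_eq_abs] at hz
    rcases abs_eq (by norm_num : (0:ℝ) ≤ 1) |>.1 hz with h1 | h1
    · rw [h1]; norm_num
    · linarith
  · right; exact him

lemma continuousOn_ff (n k : ℕ) :
    ContinuousOn (ff n k) (Metric.sphere (0:ℂ) 1) := by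
  intro z hz
  have hz1 : ‖z‖ = 1 := by
    simpa using mem_sphere_zero_iff_norm.1 hz
  rcases lt_trichotomy z.re (-(1/2)) with h1 | h1 | h1
  · rcases lt_trichotomy z.im 0 with h2 | h2 | h2
    · have hU : IsOpen {w : ℂ | w.re < -(1/2) ∧ w.im < 0} :=
        (isOpen_lt (continuous_re) continuous_const).inter
          (isOpen_lt (continuous_im) continuous_const)
      have hmem : z ∈ {w : ℂ | w.re < -(1/2) ∧ w.im < 0} := ⟨h1, h2⟩
      have hcont : ContinuousAt (fun w => Complex.exp
          ((((Complex.arg w + 2*Real.pi * (1 - cf k w.im)) / n : ℝ) : ℂ) * I)) z := by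
        have harg : ContinuousAt Complex.arg z :=
          Complex.continuousAt_arg (Or.inr (ne_of_lt h2))
        have hcf : ContinuousAt (fun w : ℂ => cf k w.im) z :=
          (cf_continuous k).continuousAt.comp Complex.continuous_im.continuousAt
        exact Complex.continuous_exp.continuousAt.comp
          (((Complex.continuous_ofReal.continuousAt.comp
            (((harg.add (((continuousAt_const).sub hcf).const_mul _)).div_const _))).mul
              continuousAt_const))
      refine (hcont.congr ?_).continuousWithinAt
      filter_upwards [hU.mem_nhds hmem] with w hw
      rw [ff, th, tf, if_pos hw.1, if_pos hw.2]
    · -- the gluing point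
      have hre : z.re < 0 := by linarith
      have hcf0 : cf k z.im = 0 := cf_of_nonneg k (le_of_eq h2.symm)
      have hargz : Complex.arg z = Real.pi := Complex.arg_eq_pi_iff.2 ⟨hre, h2⟩
      have hffz : ff n k z = Complex.exp (((Real.pi / n : ℝ) : ℂ) * I) := by
        rw [ff_eq_g0 (tf_zero_of_im_nonneg (le_of_eq h2.symm)), g0, hargz]
      have hs : ContinuousWithinAt (ff n k) {w : ℂ | 0 ≤ w.im} z := by
        have ha : ContinuousWithinAt Complex.arg {w : ℂ | 0 ≤ w.im} z :=
          Complex.continuousWithinAt_arg_of_re_neg_of_im_zero hre h2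
        have hg : ContinuousWithinAt (g0 n) {w : ℂ | 0 ≤ w.im} z := by
          refine Complex.continuous_exp.continuousAt.comp_continuousWithinAt ?_
          exact (Complex.continuous_ofReal.continuousAt.comp_continuousWithinAt
            (ha.div_const _)).mul continuousWithinAt_const
        refine hg.congr (fun w hw => ff_eq_g0 (tf_zero_of_im_nonneg hw)) ?_
        exact ff_eq_g0 (tf_zero_of_im_nonneg (le_of_eq h2.symm))
      have ht : ContinuousWithinAt (ff n k) {w : ℂ | w.im < 0} z := by
        rw [ContinuousWithinAt, hffz]
        have T1 : Tendsto (fun w : ℂ => (Complex.arg w + 2*Real.pi * (1 - cf k w.im)) / n)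
            (𝓝[{w : ℂ | w.im < 0}] z) (𝓝 (Real.pi / n)) := by
          have harg : Tendsto Complex.arg (𝓝[{w : ℂ | w.im < 0}] z) (𝓝 (-Real.pi)) :=
            Complex.tendsto_arg_nhdsWithin_im_neg_of_re_neg_of_im_zero hre h2
          have hcf : Tendsto (fun w : ℂ => cf k w.im) (𝓝[{w : ℂ | w.im < 0}] z)
              (𝓝 (0:ℝ)) := by
            have hca : ContinuousAt (fun w : ℂ => cf k w.im) z :=
              (cf_continuous k).continuousAt.comp Complex.continuous_im.continuousAt
            exact hcf0 ▸ hca.tendsto.mono_left nhdsWithin_le_nhds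
          have hsum : Tendsto (fun w : ℂ => (Complex.arg w + 2*Real.pi * (1 - cf k w.im)))
              (𝓝[{w : ℂ | w.im < 0}] z) (𝓝 (-Real.pi + 2*Real.pi * (1 - 0))) :=
            harg.add ((tendsto_const_nhds.sub hcf).const_mul _)
          have he : -Real.pi + 2*Real.pi * (1 - 0) = Real.pi := by ring
          rw [he] at hsum
          exact hsum.div_const _
        have T4 : Tendsto (fun w : ℂ => Complex.exp
            ((((Complex.arg w + 2*Real.pi * (1 - cf k w.im)) / n : ℝ) : ℂ) * I))
            (𝓝[{w : ℂ | w.im < 0}] z) (𝓝 (Complex.exp (((Real.pi / n : ℝ) : ℂ) * I))) := by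
          refine (Complex.continuous_exp.tendsto _).comp ?_
          exact ((Complex.continuous_ofReal.tendsto _).comp T1).mul tendsto_const_nhds
        refine T4.congr' ?_
        have hU : IsOpen {w : ℂ | w.re < -(1/2)} := isOpen_lt continuous_re continuous_const
        filter_upwards [nhdsWithin_le_nhds (hU.mem_nhds h1), self_mem_nhdsWithin] with w hw1 hw2
        rw [ff, th, tf, if_pos hw1, if_pos hw2]
      exact (hs.union ht).mono (fun w _ => le_or_gt 0 w.im)
    · have hU : IsOpen {w : ℂ | 0 < w.im} := isOpen_lt continuous_const continuous_im
      have hcont : ContinuousAt (g0 n) z := continuousAt_g0 (Or.inr (ne_of_gt h2))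
      refine (hcont.congr ?_).continuousWithinAt
      filter_upwards [hU.mem_nhds h2] with w hw
      exact (ff_eq_g0 (tf_zero_of_im_nonneg hw.le)).symm
  · have him : (1/2:ℝ) < |z.im| := by
      have h3 : z.re^2 + z.im^2 = 1 := by
        have := Complex.sq_norm z
        rw [hz1] at this
        rw [Complex.normSq_apply] at this
        nlinarith [this]
      nlinarith [abs_nonneg z.im, _root_.sq_abs z.im, h1]
    have hU : IsOpen {w : ℂ | 1/2 < |w.im|} :=
      isOpen_lt continuous_const (continuous_abs.comp continuous_im)
    have hcont : ContinuousAt (g0 n) z := by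
      apply continuousAt_g0 (Or.inr ?_)
      intro h0; rw [h0] at him; simp at him; linarith
    refine (hcont.congr ?_).continuousWithinAt
    filter_upwards [hU.mem_nhds him] with w hw
    rcases lt_or_ge (1/2:ℝ) w.im with h3 | h3
    · exact (ff_eq_g0 (tf_zero_of_im_nonneg (by linarith))).symm
    · have h4 : w.im ≤ -(1/2) := by
        rcases abs_cases w.im with ⟨he, _⟩ | ⟨he, _⟩ <;> simp_all <;> linarith
      exact (ff_eq_g0 (tf_zero_of_im_le h4)).symm
  · have hU : IsOpen {w : ℂ | -(1/2) < w.re} := isOpen_lt continuous_const continuous_re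
    have hcont : ContinuousAt (g0 n) z := continuousAt_g0 (mem_slit_of_sphere hz1 h1.le)
    refine (hcont.congr ?_).continuousWithinAt
    filter_upwards [hU.mem_nhds h1] with w hw
    exact (ff_eq_g0 (tf_zero_of_ge (not_lt.2 hw.le))).symm

/-! ### Operator part -/

section Op
variable {H : Type*} [NormedAddCommGroup H] [InnerProductSpace ℂ H] [CompleteSpace H]
variable (u : H →L[ℂ] H)

noncomputable def Q (g : ℂ → ℝ) (x : H) : ℝ :=
  Complex.re ⟪(cfc (fun z => (g z : ℂ)) u) x, x⟫_ℂ

variable {u}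

lemma contC {g : ℂ → ℝ} {s : Set ℂ} (hg : ContinuousOn g s) :
    ContinuousOn (fun z => (g z : ℂ)) s :=
  Complex.continuous_ofReal.comp_continuousOn hg

lemma Q_nonneg (hnormal : IsStarNormal u) {g : ℂ → ℝ}
    (hg : ContinuousOn g (spectrum ℂ u)) (hpos : ∀ z ∈ spectrum ℂ u, 0 ≤ g z) (x : H) :
    0 ≤ Q u g x := by
  set ψ : ℂ → ℂ := fun z => ((Real.sqrt (g z) : ℝ) : ℂ) with hψ
  have hψc : ContinuousOn ψ (spectrum ℂ u) :=
    contC (Real.continuous_sqrt.comp_continuousOn hg)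
  have key : cfc (fun z => (g z : ℂ)) u = star (cfc ψ u) * cfc ψ u := by
    have h1 : star (cfc ψ u) = cfc ψ u := by
      rw [← cfc_star]
      apply cfc_congr
      intro z hz
      simp [hψ, Complex.conj_ofReal]
    rw [h1, ← cfc_mul _ _ u hψc hψc]
    apply cfc_congr
    intro z hz
    simp only [hψ, ← Complex.ofReal_mul, Real.mul_self_sqrt (hpos z hz)]
  rw [Q, key, ContinuousLinearMap.mul_apply, ContinuousLinearMap.star_eq_adjoint,
    ContinuousLinearMap.adjoint_inner_left]
  simpa using inner_self_nonneg (𝕜 := ℂ) (x := (cfc ψ u) x)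

lemma Q_sub {g h : ℂ → ℝ} (hg : ContinuousOn g (spectrum ℂ u))
    (hh : ContinuousOn h (spectrum ℂ u)) (x : H) :
    Q u (fun z => g z - h z) x = Q u g x - Q u h x := by
  rw [Q, Q, Q]
  have : cfc (fun z => ((g z - h z : ℝ) : ℂ)) u
      = cfc (fun z => (g z : ℂ)) u - cfc (fun z => (h z : ℂ)) u := by
    rw [← cfc_sub _ _ u (contC hg) (contC hh)]
    push_cast
    rfl
  rw [this, ContinuousLinearMap.sub_apply, inner_sub_left]
  simp

lemma Q_smul (C : ℝ) {g : ℂ → ℝ} (hg : ContinuousOn g (spectrum ℂ u)) (x : H) :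
    Q u (fun z => C * g z) x = C * Q u g x := by
  rw [Q, Q]
  have : cfc (fun z => ((C * g z : ℝ) : ℂ)) u = (C:ℂ) • cfc (fun z => (g z : ℂ)) u := by
    rw [← cfc_smul (C:ℂ) _ u (contC hg)]
    apply cfc_congr
    intro z hz
    push_cast
    rw [smul_eq_mul]
  rw [this, ContinuousLinearMap.smul_apply, inner_smul_left, Complex.conj_ofReal,
    Complex.re_ofReal_mul]

lemma Q_mono (hnormal : IsStarNormal u) {g h : ℂ → ℝ}
    (hg : ContinuousOn g (spectrum ℂ u)) (hh : ContinuousOn h (spectrum ℂ u))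
    (hle : ∀ z ∈ spectrum ℂ u, g z ≤ h z) (x : H) : Q u g x ≤ Q u h x := by
  have h0 : 0 ≤ Q u (fun z => h z - g z) x :=
    Q_nonneg hnormal (hh.sub hg) (fun z hz => sub_nonneg.2 (hle z hz)) x
  rw [Q_sub hh hg] at h0
  linarith

lemma Q_congr {g h : ℂ → ℝ} (he : ∀ z ∈ spectrum ℂ u, g z = h z) (x : H) :
    Q u g x = Q u h x := by
  have he2 : cfc (fun z => ((g z : ℝ):ℂ)) u = cfc (fun z => ((h z : ℝ):ℂ)) u :=
    cfc_congr (fun z hz => by rw [he z hz])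
  rw [Q, Q, he2]

lemma Q_one (hnormal : IsStarNormal u) (x : H) : Q u (fun _ => 1) x = ‖x‖^2 := by
  rw [Q]
  have : cfc (fun _ : ℂ => ((1:ℝ):ℂ)) u = 1 := by
    push_cast
    exact cfc_one ℂ u
  rw [this, ContinuousLinearMap.one_apply]
  simpa using inner_self_eq_norm_sq (𝕜 := ℂ) x

lemma norm_cfc_sq (hnormal : IsStarNormal u) {g : ℂ → ℂ}
    (hg : ContinuousOn g (spectrum ℂ u)) (x : H) :
    ‖cfc g u x‖^2 = Q u (fun z => Complex.normSq (g z)) x := by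
  have h1 : star (cfc g u) * cfc g u = cfc (fun z => ((Complex.normSq (g z) : ℝ) : ℂ)) u := by
    rw [← cfc_star g u, ← cfc_mul _ _ u hg.star hg]
    apply cfc_congr
    intro z hz
    show star (g z) * g z = ((Complex.normSq (g z) : ℝ) : ℂ)
    rw [mul_comm, Complex.star_def]
    exact Complex.mul_conj (g z)
  have h2 : (⟪cfc g u x, cfc g u x⟫_ℂ).re = ‖cfc g u x‖^2 := by
    simpa using inner_self_eq_norm_sq (𝕜 := ℂ) (cfc g u x)
  rw [Q, ← h1, ContinuousLinearMap.mul_apply,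
    ContinuousLinearMap.star_eq_adjoint, ContinuousLinearMap.adjoint_inner_left, h2]

end Op

theorem stmt7_main (H : Type*) [NormedAddCommGroup H] [InnerProductSpace ℂ H] [CompleteSpace H]
    (u : H →L[ℂ] H) (hu : u ∈ unitary (H →L[ℂ] H)) (n : ℕ) (hn : 1 ≤ n) :
    ∃ v : H →L[ℂ] H, v ∈ unitary (H →L[ℂ] H) ∧ v ^ n = u := by
  have hnormal : IsStarNormal u := isStarNormal_of_mem_unitary hu
  have hσ : spectrum ℂ u ⊆ Metric.sphere 0 1 := spectrum.subset_circle_of_unitary hu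
  have habs : ∀ z ∈ spectrum ℂ u, ‖z‖ = 1 := fun z hz => by
    simpa using mem_sphere_zero_iff_norm.1 (hσ hz)
  have hffc : ∀ k, ContinuousOn (ff n k) (spectrum ℂ u) :=
    fun k => (continuousOn_ff n k).mono hσ
  have hcfim : ∀ k, ContinuousOn (fun z : ℂ => cf k z.im) (spectrum ℂ u) :=
    fun k => ((cf_continuous k).comp continuous_im).continuousOn
  set T : ℕ → H →L[ℂ] H := fun k => cfc (ff n k) u with hT
  -- each T k is a vector-isometry
  have hT1 : ∀ (k : ℕ) (x : H), ‖T k x‖^2 = ‖x‖^2 := by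
    intro k x
    rw [hT, norm_cfc_sq hnormal (hffc k) x]
    have he : Q u (fun z => Complex.normSq (ff n k z)) x = Q u (fun _ => 1) x :=
      Q_congr (fun z hz => by rw [Complex.normSq_eq_norm_sq, abs_ff]; norm_num) x
    rw [he, Q_one hnormal x]
  have hTiso : ∀ (k : ℕ) (x : H), ‖T k x‖ = ‖x‖ := fun k x => by
    rw [← Real.sqrt_sq (norm_nonneg (T k x)), hT1 k x, Real.sqrt_sq (norm_nonneg x)]
  -- star (T k) * T k = 1 and T k * (conj version) = 1
  have hTT : ∀ k, star (T k) * T k = 1 := by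
    intro k
    rw [hT, ← cfc_star (ff n k) u, ← cfc_mul _ _ u (hffc k).star (hffc k)]
    calc cfc (fun z => star (ff n k z) * ff n k z) u = cfc (1 : ℂ → ℂ) u := by
          apply cfc_congr
          intro z hz
          show star (ff n k z) * ff n k z = 1
          rw [mul_comm, Complex.star_def, Complex.mul_conj]
          norm_cast
          rw [Complex.normSq_eq_norm_sq, abs_ff]; norm_num
      _ = 1 := cfc_one ℂ u
  set T' : ℕ → H →L[ℂ] H := fun k => cfc (fun z => star (ff n k z)) u with hT'
  have hT'c : ∀ k, ContinuousOn (fun z => star (ff n k z)) (spectrum ℂ u) :=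
    fun k => (hffc k).star
  have hTT' : ∀ k, T k * T' k = 1 := by
    intro k
    rw [hT, hT', ← cfc_mul _ _ u (hffc k) (hT'c k)]
    calc cfc (fun z => ff n k z * star (ff n k z)) u = cfc (1 : ℂ → ℂ) u := by
          apply cfc_congr
          intro z hz
          show ff n k z * star (ff n k z) = 1
          rw [Complex.star_def, Complex.mul_conj]
          norm_cast
          rw [Complex.normSq_eq_norm_sq, abs_ff]; norm_num
      _ = 1 := cfc_one ℂ u
  -- the monotone bounded sequence b x k
  set b : H → ℕ → ℝ := fun x k => Q u (fun z => cf k z.im) x with hb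
  have hbmono : ∀ x, Monotone (b x) := fun x k j hkj =>
    Q_mono hnormal (hcfim k) (hcfim j) (fun z _ => cf_mono hkj z.im) x
  have hbbdd : ∀ x k, b x k ≤ ‖x‖^2 := fun x k => by
    calc b x k ≤ Q u (fun _ => 1) x :=
          Q_mono hnormal (hcfim k) continuousOn_const (fun z _ => cf_le_one k z.im) x
      _ = ‖x‖^2 := Q_one hnormal x
  have hbrange : ∀ x, BddAbove (Set.range (b x)) := fun x =>
    ⟨‖x‖^2, by rintro - ⟨k, rfl⟩; exact hbbdd x k⟩
  set C : ℝ := 16 * Real.pi^2 with hC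
  have hC0 : 0 ≤ C := by rw [hC]; positivity
  -- the key quadratic estimate
  have key : ∀ (g : ℂ → ℂ) (k j : ℕ), k ≤ j → ContinuousOn g (spectrum ℂ u) →
      (∀ z ∈ spectrum ℂ u, ‖(g z)‖ ≤ 4*Real.pi*(cf j z.im - cf k z.im)) →
      ∀ x, ‖cfc g u x‖^2 ≤ C * (b x j - b x k) := by
    intro g k j hkj hgc hgb x
    rw [norm_cfc_sq hnormal hgc x]
    have hgc2 : ContinuousOn (fun z => Complex.normSq (g z)) (spectrum ℂ u) :=
      Complex.continuous_normSq.comp_continuousOn hgc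
    have hgc3 : ContinuousOn (fun z : ℂ => C * (cf j z.im - cf k z.im)) (spectrum ℂ u) :=
      continuousOn_const.mul ((hcfim j).sub (hcfim k))
    have h1 : ∀ z ∈ spectrum ℂ u,
        Complex.normSq (g z) ≤ C * (cf j z.im - cf k z.im) := by
      intro z hz
      have hΔ0 : 0 ≤ cf j z.im - cf k z.im := by linarith [cf_mono hkj z.im]
      have hΔ1 : cf j z.im - cf k z.im ≤ 1 := by
        linarith [cf_le_one j z.im, cf_nonneg k z.im]
      have hgg := hgb z hz
      have habs0 : 0 ≤ ‖(g z)‖ := norm_nonneg (g z)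
      rw [Complex.normSq_eq_norm_sq]
      have hπ := Real.pi_pos
      calc (‖(g z)‖)^2 ≤ (4*Real.pi*(cf j z.im - cf k z.im))^2 := by nlinarith
        _ = C * (cf j z.im - cf k z.im) * (cf j z.im - cf k z.im) := by rw [hC]; ring
        _ ≤ C * (cf j z.im - cf k z.im) * 1 := by
            nlinarith [mul_nonneg hC0 hΔ0]
        _ = C * (cf j z.im - cf k z.im) := by ring
    calc Q u (fun z => Complex.normSq (g z)) x
        ≤ Q u (fun z => C * (cf j z.im - cf k z.im)) x := Q_mono hnormal hgc2 hgc3 h1 x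
      _ = C * (b x j - b x k) := by
          rw [Q_smul C (g := fun z : ℂ => cf j z.im - cf k z.im) ((hcfim j).sub (hcfim k)), Q_sub (hcfim j) (hcfim k)]
  -- Cauchy sequences
  have hdiffT : ∀ k j, k ≤ j → ∀ x, ‖T k x - T j x‖^2 ≤ C * (b x j - b x k) := by
    intro k j hkj x
    have e : T k x - T j x = cfc (fun z => ff n k z - ff n j z) u x := by
      rw [hT, cfc_sub _ _ u (hffc k) (hffc j), ContinuousLinearMap.sub_apply]
    rw [e]
    exact key _ k j hkj ((hffc k).sub (hffc j))
      (fun z _ => ff_diff_bound hn hkj z) x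
  have hdiffT' : ∀ k j, k ≤ j → ∀ x, ‖T' k x - T' j x‖^2 ≤ C * (b x j - b x k) := by
    intro k j hkj x
    have e : T' k x - T' j x = cfc (fun z => star (ff n k z) - star (ff n j z)) u x := by
      rw [hT', cfc_sub _ _ u (hT'c k) (hT'c j), ContinuousLinearMap.sub_apply]
    rw [e]
    refine key _ k j hkj ((hT'c k).sub (hT'c j)) (fun z _ => ?_) x
    have : star (ff n k z) - star (ff n j z) = star (ff n k z - ff n j z) := by
      rw [star_sub]
    simp only [Pi.sub_apply]; rw [this, Complex.star_def, Complex.norm_conj]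
    exact ff_diff_bound hn hkj z
  have hCS : ∀ (G : ℕ → H →L[ℂ] H),
      (∀ k j, k ≤ j → ∀ x, ‖G k x - G j x‖^2 ≤ C * (b x j - b x k)) →
      ∀ x, CauchySeq (fun k => G k x) := by
    intro G hG x
    set L : ℝ := ⨆ k, b x k with hL
    have hbL : Tendsto (b x) atTop (𝓝 L) := tendsto_atTop_ciSup (hbmono x) (hbrange x)
    have hble : ∀ k, b x k ≤ L := fun k => le_ciSup (hbrange x) k
    refine cauchySeq_of_le_tendsto_0 (fun N => Real.sqrt (C * (L - b x N))) ?_ ?_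
    · intro m m' N hm hm'
      have main : ∀ p q, p ≤ q → N ≤ p → dist (G p x) (G q x) ≤ Real.sqrt (C * (L - b x N)) := by
        intro p q hpq hNp
        rw [dist_eq_norm]
        have h1 : ‖G p x - G q x‖^2 ≤ C * (L - b x N) := by
          refine le_trans (hG p q hpq x) ?_
          have := hble q
          have := hbmono x hNp
          nlinarith
        calc ‖G p x - G q x‖ = Real.sqrt (‖G p x - G q x‖^2) :=
              (Real.sqrt_sq (norm_nonneg _)).symm
          _ ≤ Real.sqrt (C * (L - b x N)) := Real.sqrt_le_sqrt h1
      rcases le_total m m' with h | h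
      · exact main m m' h hm
      · rw [dist_comm]; exact main m' m h hm'
    · have h0 : Tendsto (fun N => C * (L - b x N)) atTop (𝓝 (C * (L - L))) :=
        (tendsto_const_nhds.sub hbL).const_mul C
      rw [sub_self, mul_zero] at h0
      have := (Real.continuous_sqrt.tendsto 0).comp h0
      simpa only [Function.comp_def, Real.sqrt_zero] using this
  -- construct v
  have hex : ∀ x : H, ∃ l, Tendsto (fun k => T k x) atTop (𝓝 l) := fun x =>
    cauchySeq_tendsto_of_complete (hCS T hdiffT x)
  choose vf hvf using hex
  let vL : H →ₗ[ℂ] H :=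
    { toFun := vf
      map_add' := fun x y => tendsto_nhds_unique (hvf (x+y))
        (by simpa [map_add] using ((hvf x).add (hvf y)))
      map_smul' := fun c x => tendsto_nhds_unique (hvf (c • x))
        (by simpa [map_smul] using ((hvf x).const_smul c)) }
  have hvnorm : ∀ x, ‖vf x‖ = ‖x‖ := fun x =>
    tendsto_nhds_unique (by simpa only [hTiso] using (hvf x).norm) tendsto_const_nhds
  let v : H →L[ℂ] H := vL.mkContinuous 1 (fun x => by
    show ‖vf x‖ ≤ 1 * ‖x‖
    rw [hvnorm, one_mul])
  have hvT : ∀ x, Tendsto (fun k => T k x) atTop (𝓝 (v x)) := hvf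
  -- star v * v = 1
  have hstar : star v * v = 1 := by
    refine ContinuousLinearMap.ext fun x => ?_
    refine ext_inner_right ℂ fun y => ?_
    rw [ContinuousLinearMap.mul_apply, ContinuousLinearMap.star_eq_adjoint,
      ContinuousLinearMap.adjoint_inner_left, ContinuousLinearMap.one_apply]
    have h1 : Tendsto (fun k => (⟪T k x, T k y⟫_ℂ : ℂ)) atTop (𝓝 ⟪v x, v y⟫_ℂ) :=
      (hvT x).inner (hvT y)
    have h2 : ∀ k, (⟪T k x, T k y⟫_ℂ : ℂ) = ⟪x, y⟫_ℂ := by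
      intro k
      rw [← ContinuousLinearMap.adjoint_inner_left, ← ContinuousLinearMap.star_eq_adjoint,
        ← ContinuousLinearMap.mul_apply, hTT k, ContinuousLinearMap.one_apply]
    simp only [h2] at h1
    exact tendsto_nhds_unique h1 tendsto_const_nhds
  -- surjectivity
  have hsurj : ∀ y : H, ∃ x, v x = y := by
    intro y
    obtain ⟨x, hx⟩ := cauchySeq_tendsto_of_complete (hCS T' hdiffT' y)
    refine ⟨x, ?_⟩
    have h3 : ∀ k, T k (T' k y) = y := fun k => by
      rw [← ContinuousLinearMap.mul_apply, hTT' k, ContinuousLinearMap.one_apply]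
    have h4 : Tendsto (fun k => T k (T' k y) - v x) atTop (𝓝 0) := by
      have hb1 : Tendsto (fun k => ‖T' k y - x‖) atTop (𝓝 0) := by
        have := (hx.sub_const x).norm
        simpa using this
      have hb2 : Tendsto (fun k => ‖T k x - v x‖) atTop (𝓝 0) := by
        have := ((hvT x).sub_const (v x)).norm
        simpa using this
      refine squeeze_zero_norm (fun k => ?_) (by simpa using hb1.add hb2)
      have e : T k (T' k y) - v x = T k (T' k y - x) + (T k x - v x) := by
        rw [map_sub]; abel
      rw [e]
      calc ‖T k (T' k y - x) + (T k x - v x)‖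
          ≤ ‖T k (T' k y - x)‖ + ‖T k x - v x‖ := norm_add_le _ _
        _ = ‖T' k y - x‖ + ‖T k x - v x‖ := by rw [hTiso]
    rw [tendsto_sub_nhds_zero_iff] at h4
    simp only [h3] at h4
    exact tendsto_nhds_unique h4 tendsto_const_nhds
  have hvv : v * star v = 1 := by
    refine ContinuousLinearMap.ext fun y => ?_
    obtain ⟨x, hx⟩ := hsurj y
    have h5 : star v (v x) = x := by
      have := congrFun (congrArg DFunLike.coe hstar) x
      simpa [ContinuousLinearMap.mul_apply] using this
    rw [ContinuousLinearMap.mul_apply, ContinuousLinearMap.one_apply, ← hx, h5]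
  -- powers converge
  have hpow : ∀ (m : ℕ) (x : H), Tendsto (fun k => (T k ^ m) x) atTop (𝓝 ((v ^ m) x)) := by
    intro m
    induction m with
    | zero => intro x; simpa using tendsto_const_nhds
    | succ m ih =>
      intro x
      have e1 : ∀ k, (T k ^ (m+1)) x = T k ((T k ^ m) x) := fun k => by
        rw [pow_succ', ContinuousLinearMap.mul_apply]
      have e2 : (v ^ (m+1)) x = v ((v ^ m) x) := by
        rw [pow_succ', ContinuousLinearMap.mul_apply]
      have h4 : Tendsto (fun k => (T k ^ (m+1)) x - (v ^ (m+1)) x) atTop (𝓝 0) := by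
        have hb1 : Tendsto (fun k => ‖(T k ^ m) x - (v ^ m) x‖) atTop (𝓝 0) := by
          have := ((ih x).sub_const ((v ^ m) x)).norm
          simpa using this
        have hb2 : Tendsto (fun k => ‖T k ((v ^ m) x) - v ((v ^ m) x)‖) atTop (𝓝 0) := by
          have := ((hvT ((v ^ m) x)).sub_const (v ((v ^ m) x))).norm
          simpa using this
        refine squeeze_zero_norm (fun k => ?_) (by simpa only [add_zero] using hb1.add hb2)
        rw [e1, e2]
        have e : T k ((T k ^ m) x) - v ((v ^ m) x)
            = T k ((T k ^ m) x - (v ^ m) x) + (T k ((v ^ m) x) - v ((v ^ m) x)) := by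
          rw [map_sub]; abel
        rw [e]
        calc ‖T k ((T k ^ m) x - (v ^ m) x) + (T k ((v ^ m) x) - v ((v ^ m) x))‖
            ≤ ‖T k ((T k ^ m) x - (v ^ m) x)‖ + ‖T k ((v ^ m) x) - v ((v ^ m) x)‖ :=
              norm_add_le _ _
          _ = ‖(T k ^ m) x - (v ^ m) x‖ + ‖T k ((v ^ m) x) - v ((v ^ m) x)‖ := by rw [hTiso]
      rwa [tendsto_sub_nhds_zero_iff] at h4
  -- (T k)^n x → u x
  have hfin : ∀ x : H, Tendsto (fun k => (T k ^ n) x) atTop (𝓝 (u x)) := by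
    intro x
    set L : ℝ := ⨆ k, b x k with hL
    have hbL : Tendsto (b x) atTop (𝓝 L) := tendsto_atTop_ciSup (hbmono x) (hbrange x)
    have hble : ∀ k, b x k ≤ L := fun k => le_ciSup (hbrange x) k
    have hbnd : ∀ k, ‖(T k ^ n) x - u x‖ ≤ Real.sqrt (C * (L - b x k)) := by
      intro k
      have e3 : (T k ^ n) x = cfc (fun z => ff n k z ^ n) u x := by
        rw [hT, ← cfc_pow (ff n k) n u (hffc k)]
      have e4 : (T k ^ n) x - u x = cfc (fun z => ff n k z ^ n - z) u x := by
        rw [e3]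
        nth_rewrite 2 [← cfc_id' ℂ u]
        rw [cfc_sub (fun z => ff n k z ^ n) (fun z => z) u ((hffc k).pow n) (continuousOn_id' _),
          ContinuousLinearMap.sub_apply]
      have h1 : ‖cfc (fun z => ff n k z ^ n - z) u x‖^2 ≤ C * (b x (k+1) - b x k) :=
        key _ k (k+1) (by omega) (((hffc k).pow n).sub (continuousOn_id' _))
          (fun z hz => ff_pow_diff_bound hn (by omega) (habs z hz)) x
      have h2 : ‖cfc (fun z => ff n k z ^ n - z) u x‖^2 ≤ C * (L - b x k) := by
        refine le_trans h1 ?_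
        have := hble (k+1)
        nlinarith
      rw [e4]
      calc ‖cfc (fun z => ff n k z ^ n - z) u x‖
          = Real.sqrt (‖cfc (fun z => ff n k z ^ n - z) u x‖^2) :=
            (Real.sqrt_sq (norm_nonneg _)).symm
        _ ≤ Real.sqrt (C * (L - b x k)) := Real.sqrt_le_sqrt h2
    have h0 : Tendsto (fun k => Real.sqrt (C * (L - b x k))) atTop (𝓝 0) := by
      have h0' : Tendsto (fun k => C * (L - b x k)) atTop (𝓝 (C * (L - L))) :=
        (tendsto_const_nhds.sub hbL).const_mul C
      rw [sub_self, mul_zero] at h0'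
      have := (Real.continuous_sqrt.tendsto 0).comp h0'
      simpa only [Function.comp_def, Real.sqrt_zero] using this
    have h5 : Tendsto (fun k => (T k ^ n) x - u x) atTop (𝓝 0) :=
      squeeze_zero_norm hbnd h0
    rwa [tendsto_sub_nhds_zero_iff] at h5
  -- conclude
  refine ⟨v, Unitary.mem_iff.2 ⟨hstar, hvv⟩, ?_⟩
  refine ContinuousLinearMap.ext fun x => ?_
  exact tendsto_nhds_unique (hpow n x) (hfin x)

end Stmt7Root


/-- Every unitary bounded linear operator `u` on a complex Hilbert space `H` has, for each
natural number `n ≥ 1`, a unitary n-th root: a unitary bounded linear operator `v` on `H`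
with `v ^ n = u`. -/
theorem stmt_7 (H : Type*) [NormedAddCommGroup H] [InnerProductSpace ℂ H] [CompleteSpace H]
    (u : H →L[ℂ] H) (hu : u ∈ unitary (H →L[ℂ] H)) (n : ℕ) (hn : 1 ≤ n) :
    ∃ v : H →L[ℂ] H, v ∈ unitary (H →L[ℂ] H) ∧ v ^ n = u :=
  Stmt7Root.stmt7_main H u hu n hn
end

section
/- There exist a nonzero complex Hilbert space H and unitary bounded linear operators u, v, u₁ on H such that: u and v commute (uv = vu), the spectrum of u and the spectrum of v both equal the full unit circle {z ∈ ℂ : |z| = 1}, u₁² = u, and u₁v = −vu₁. -/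
noncomputable section Stmt11Aux

open scoped ENNReal

namespace Stmt11Aux

variable {I : Type*}

local notation "H2" => lp (fun _ : I => ℂ) 2

lemma two_pos' : (0:ℝ) < (2 : ℝ≥0∞).toReal := by norm_num

lemma wp_mem (σ : Equiv.Perm I) {c : I → ℂ} (hc : ∀ i, ‖c i‖ = 1) (f : H2) :
    Memℓp (fun i => c i * f (σ i)) 2 := by
  apply memℓp_gen
  have hs : Summable fun i : I => ‖f i‖ ^ (2 : ℝ≥0∞).toReal :=
    (memℓp_gen_iff two_pos').1 (lp.memℓp f)
  have h2 : Summable fun i : I => ‖f (σ i)‖ ^ (2 : ℝ≥0∞).toReal :=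
    (Equiv.summable_iff σ).2 hs
  convert h2 using 2 with i
  rw [norm_mul, hc, one_mul]

/-- Weighted permutation operator on `ℓ²(I)` as a linear isometry equivalence. -/
def wp (σ : Equiv.Perm I) (c : I → ℂ) (hc : ∀ i, ‖c i‖ = 1) : H2 ≃ₗᵢ[ℂ] H2 where
  toFun f := ⟨fun i => c i * f (σ i), wp_mem σ hc f⟩
  map_add' f g := by
    ext i
    show c i * (f + g) (σ i) = (⟨fun i => c i * f (σ i), _⟩ + ⟨fun i => c i * g (σ i), _⟩ : H2) i
    rw [lp.coeFn_add, lp.coeFn_add]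
    simp [mul_add]
  map_smul' a f := by
    ext i
    show c i * (a • f) (σ i) = (a • (⟨fun i => c i * f (σ i), _⟩ : H2)) i
    rw [lp.coeFn_smul, lp.coeFn_smul]
    simp [smul_eq_mul]
    ring
  invFun f := ⟨fun i => (c (σ.symm i))⁻¹ * f (σ.symm i),
    wp_mem σ.symm (c := fun i => (c (σ.symm i))⁻¹)
      (fun i => by rw [norm_inv, hc, inv_one]) f⟩
  left_inv f := by
    ext i
    have hne : c (σ.symm i) ≠ 0 := fun h => by simpa [h] using hc (σ.symm i)
    show (c (σ.symm i))⁻¹ * (c (σ.symm i) * f (σ (σ.symm i))) = f i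
    rw [Equiv.apply_symm_apply, inv_mul_cancel_left₀ hne]
  right_inv f := by
    ext i
    have hne : c i ≠ 0 := fun h => by simpa [h] using hc i
    show c i * ((c (σ.symm (σ i)))⁻¹ * f (σ.symm (σ i))) = f i
    rw [Equiv.symm_apply_apply, mul_inv_cancel_left₀ hne]
  norm_map' f := by
    rw [lp.norm_eq_tsum_rpow two_pos', lp.norm_eq_tsum_rpow two_pos']
    congr 1
    rw [← Equiv.tsum_eq σ (fun i => ‖f i‖ ^ (2 : ℝ≥0∞).toReal)]
    apply tsum_congr
    intro i
    show ‖c i * f (σ i)‖ ^ _ = _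
    rw [norm_mul, hc, one_mul]

@[simp] lemma wp_apply (σ : Equiv.Perm I) (c : I → ℂ) (hc : ∀ i, ‖c i‖ = 1) (f : H2) (i : I) :
    (((wp σ c hc : H2 ≃ₗᵢ[ℂ] H2) : H2 →L[ℂ] H2) f) i = c i * f (σ i) := rfl

lemma wp_unitary (σ : Equiv.Perm I) (c : I → ℂ) (hc : ∀ i, ‖c i‖ = 1) :
    ((wp σ c hc : H2 ≃ₗᵢ[ℂ] H2) : H2 →L[ℂ] H2) ∈ unitary (H2 →L[ℂ] H2) :=
  (Unitary.linearIsometryEquiv.symm (wp σ c hc)).property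

lemma mem_spectrum_of_eigen {Hs : Type*} [NormedAddCommGroup Hs] [NormedSpace ℂ Hs]
    [CompleteSpace Hs] (T : Hs →L[ℂ] Hs) {a : ℂ} {x : Hs} (hx : x ≠ 0) (h : T x = a • x) :
    a ∈ spectrum ℂ T := by
  rw [spectrum.mem_iff]
  intro hunit
  obtain ⟨U, hU⟩ := hunit
  have h0 : (algebraMap ℂ (Hs →L[ℂ] Hs) a - T) x = 0 := by
    rw [ContinuousLinearMap.sub_apply, Algebra.algebraMap_eq_smul_one, h]
    simp
  have hx0 : x = 0 := by
    have h1 : ((↑U⁻¹ * ↑U : Hs →L[ℂ] Hs)) x = x := by rw [U.inv_mul]; rfl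
    rw [ContinuousLinearMap.mul_apply, hU, h0, map_zero] at h1
    exact h1.symm
  exact hx hx0

lemma single_ne_zero' [DecidableEq I] (j : I) : (lp.single 2 j (1:ℂ) : H2) ≠ 0 := by
  intro h
  have := congrArg (fun g : H2 => (g : ∀ _ : I, ℂ) j) h
  simp only [lp.single_apply_self] at this
  rw [lp.coeFn_zero] at this
  exact one_ne_zero this


lemma diag_eigen [DecidableEq I] (c : I → ℂ) (hc : ∀ i, ‖c i‖ = 1) (j : I) :
    ((wp (Equiv.refl I) c hc : H2 ≃ₗᵢ[ℂ] H2) : H2 →L[ℂ] H2) (lp.single 2 j 1)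
      = c j • lp.single 2 j 1 := by
  ext i
  rw [wp_apply]
  show c i * (lp.single 2 j (1:ℂ) : H2) ((Equiv.refl I) i)
      = (c j • (lp.single 2 j (1:ℂ) : H2)) i
  rw [lp.coeFn_smul, Pi.smul_apply, smul_eq_mul, Equiv.refl_apply]
  rcases eq_or_ne i j with rfl | h
  · rw [lp.single_apply_self]
  · rw [lp.single_apply_ne 2 j _ h, mul_zero, mul_zero]

lemma diag_spectrum [DecidableEq I] (c : I → ℂ) (hc : ∀ i, ‖c i‖ = 1)
    (hsurj : ∀ w : ℂ, ‖w‖ = 1 → ∃ j, c j = w) :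
    spectrum ℂ (((wp (Equiv.refl I) c hc : H2 ≃ₗᵢ[ℂ] H2)) : H2 →L[ℂ] H2)
      = Metric.sphere (0:ℂ) 1 := by
  apply Set.eq_of_subset_of_subset
  · exact spectrum.subset_circle_of_unitary (wp_unitary _ _ _)
  · intro w hw
    obtain ⟨j, hj⟩ := hsurj w (by simpa using mem_sphere_zero_iff_norm.mp hw)
    exact mem_spectrum_of_eigen _ (single_ne_zero' j)
      (by rw [diag_eigen c hc j, hj])

lemma exists_sqrt_circle {w : ℂ} (hw : ‖w‖ = 1) : ∃ z : ℂ, ‖z‖ = 1 ∧ z ^ 2 = w := by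
  have hw0 : w ≠ 0 := by intro h; rw [h] at hw; simp at hw
  refine ⟨Complex.exp ((1/2 : ℂ) * Complex.log w), ?_, ?_⟩
  · rw [Complex.norm_exp]
    have hre : ((1/2 : ℂ) * Complex.log w).re = (1/2 : ℝ) * Real.log ‖w‖ := by
      simp [Complex.mul_re, Complex.log_re, Complex.log_im]
    rw [hre, hw, Real.log_one, mul_zero, Real.exp_zero]
  · rw [show (2 : ℕ) = 2 from rfl] at *
    rw [← Complex.exp_nat_mul]
    rw [show ((2:ℕ) : ℂ) * ((1/2 : ℂ) * Complex.log w) = Complex.log w by push_cast; ring]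
    exact Complex.exp_log hw0

/-- The index type: the unit circle times a two-point set. -/
abbrev Idx : Type := ↥(Metric.sphere (0:ℂ) 1) × Bool

/-- The coordinate permutation flipping the `Bool` component. -/
def σswap : Equiv.Perm Idx :=
  Equiv.prodCongr (Equiv.refl _) ⟨fun b => !b, fun b => !b, Bool.not_not, Bool.not_not⟩

lemma σswap_apply (i : Idx) : σswap i = (i.1, !i.2) := rfl

lemma norm_coe_sphere (z : Metric.sphere (0:ℂ) 1) : ‖(z:ℂ)‖ = 1 :=
  mem_sphere_zero_iff_norm.mp z.2

def cu : Idx → ℂ := fun i => (i.1 : ℂ) ^ 2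
def cv : Idx → ℂ := fun i => if i.2 then -(i.1:ℂ) else (i.1:ℂ)
def c1 : Idx → ℂ := fun i => (i.1 : ℂ)

lemma hcu : ∀ i : Idx, ‖cu i‖ = 1 := fun i => by
  rw [cu, norm_pow, norm_coe_sphere, one_pow]
lemma hcv : ∀ i : Idx, ‖cv i‖ = 1 := fun i => by
  cases h : i.2 <;> simp [cv, h, norm_coe_sphere]
lemma hc1 : ∀ i : Idx, ‖c1 i‖ = 1 := fun i => norm_coe_sphere i.1

/-- The Hilbert space `ℓ²(S¹ × {0,1})`. -/
abbrev Hsp : Type := lp (fun _ : Idx => ℂ) 2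

noncomputable def uop : Hsp →L[ℂ] Hsp := ((wp (Equiv.refl Idx) cu hcu : Hsp ≃ₗᵢ[ℂ] Hsp))
noncomputable def vop : Hsp →L[ℂ] Hsp := ((wp (Equiv.refl Idx) cv hcv : Hsp ≃ₗᵢ[ℂ] Hsp))
noncomputable def u1op : Hsp →L[ℂ] Hsp := ((wp σswap c1 hc1 : Hsp ≃ₗᵢ[ℂ] Hsp))


end Stmt11Aux

open Stmt11Aux

/-- A witness for Statement 11: a nonzero complex Hilbert space `H` together with unitary
bounded linear operators `u`, `v`, `u₁` on `H` such that `u` and `v` commute, the spectra of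
`u` and `v` both equal the full unit circle, `u₁ ^ 2 = u`, and `u₁` anticommutes with `v`. -/
structure Stmt11Witness where
  H : Type
  [iN : NormedAddCommGroup H]
  [iP : InnerProductSpace ℂ H]
  [iC : CompleteSpace H]
  [iT : Nontrivial H]
  u : H →L[ℂ] H
  v : H →L[ℂ] H
  u₁ : H →L[ℂ] H
  hu : u ∈ unitary (H →L[ℂ] H)
  hv : v ∈ unitary (H →L[ℂ] H)
  hu₁ : u₁ ∈ unitary (H →L[ℂ] H)
  hcomm : u * v = v * u
  hspec_u : spectrum ℂ u = Metric.sphere (0 : ℂ) 1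
  hspec_v : spectrum ℂ v = Metric.sphere (0 : ℂ) 1
  hsq : u₁ ^ 2 = u
  hanti : u₁ * v = -(v * u₁)

/-- There exist a nonzero complex Hilbert space `H` and unitary operators `u, v, u₁` on `H`
such that `u` and `v` commute, both have full unit-circle spectrum, `u₁² = u`, and
`u₁ v = - v u₁`. -/
theorem stmt_11 : Nonempty Stmt11Witness := by
  classical
  haveI : Nontrivial Hsp :=
    ⟨lp.single 2 (⟨1, by simp⟩, false) 1, 0, single_ne_zero' _⟩
  refine ⟨{ H := Hsp
            u := uop
            v := vop
            u₁ := u1op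
            hu := wp_unitary _ _ _
            hv := wp_unitary _ _ _
            hu₁ := wp_unitary _ _ _
            hcomm := ?_
            hspec_u := ?_
            hspec_v := ?_
            hsq := ?_
            hanti := ?_ }⟩
  · -- commutation
    ext f i
    show cu i * (cv i * f i) = cv i * (cu i * f i)
    ring
  · -- spectrum of u
    refine diag_spectrum cu hcu fun w hw => ?_
    obtain ⟨z, hz1, hz2⟩ := exists_sqrt_circle hw
    exact ⟨(⟨z, mem_sphere_zero_iff_norm.mpr hz1⟩, false), hz2⟩
  · -- spectrum of v
    refine diag_spectrum cv hcv fun w hw => ?_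
    exact ⟨(⟨w, mem_sphere_zero_iff_norm.mpr hw⟩, false), rfl⟩
  · -- u₁ ^ 2 = u
    rw [pow_two]
    ext f i
    obtain ⟨z, b⟩ := i
    cases b
    · show (z:ℂ) * ((z:ℂ) * f (z, false)) = (z:ℂ) ^ 2 * f (z, false)
      ring
    · show (z:ℂ) * ((z:ℂ) * f (z, true)) = (z:ℂ) ^ 2 * f (z, true)
      ring
  · -- anticommutation
    ext f i
    obtain ⟨z, b⟩ := i
    cases b
    · show (z:ℂ) * (-(z:ℂ) * f (z, true)) = -((z:ℂ) * ((z:ℂ) * f (z, true)))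
      ring
    · show (z:ℂ) * ((z:ℂ) * f (z, false)) = -(-(z:ℂ) * ((z:ℂ) * f (z, false)))
      ring

end Stmt11Aux
end
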